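/- Let a, b be real numbers such that pa − qb ≠ 0 for every (p,q) ∈ ℤ² \ {(0,0)}. Then sup_{t∈ℝ} |cos(ta) − cos(tb)| = 2. -/

import Mathlib

open Real

/-- cos is 1-Lipschitz. -/
lemma my_abs_cos_sub_cos_le (u v : ℝ) : |Real.cos u - Real.cos v| ≤ |u - v| := by
  rw [Real.cos_sub_cos]
  have h1 : |Real.sin ((u + v) / 2)| ≤ 1 := Real.abs_sin_le_one _
  have h2 : |Real.sin ((u - v) / 2)| ≤ |(u - v) / 2| := Real.abs_sin_le_abs
  calc |(-2) * Real.sin ((u + v) / 2) * Real.sin ((u - v) / 2)|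
      = 2 * |Real.sin ((u + v) / 2)| * |Real.sin ((u - v) / 2)| := by
        rw [abs_mul, abs_mul]; norm_num
    _ ≤ 2 * 1 * |(u - v) / 2| := by
        apply mul_le_mul _ h2 (abs_nonneg _) (by positivity)
        exact mul_le_mul_of_nonneg_left h1 (by norm_num)
    _ = |u - v| := by rw [abs_div, abs_two]; ring

/-- If x is irrational, the subgroup generated by x and 1 is dense in ℝ. -/
lemma my_dense_closure {x : ℝ} (hx : Irrational x) :
    Dense ((AddSubgroup.closure ({x, 1} : Set ℝ) : Set ℝ)) := by
  rcases AddSubgroup.dense_or_cyclic (AddSubgroup.closure ({x, 1} : Set ℝ)) with hd | ⟨c, hc⟩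
  · exact hd
  · exfalso
    have hxmem : x ∈ AddSubgroup.closure ({x, 1} : Set ℝ) :=
      AddSubgroup.subset_closure (by simp)
    have h1mem : (1 : ℝ) ∈ AddSubgroup.closure ({x, 1} : Set ℝ) :=
      AddSubgroup.subset_closure (by simp)
    rw [hc, AddSubgroup.mem_closure_singleton] at hxmem h1mem
    obtain ⟨m, hm⟩ := hxmem
    obtain ⟨n, hn⟩ := h1mem
    have hn0 : (n : ℝ) ≠ 0 := by
      intro h0
      rw [zsmul_eq_mul, h0, zero_mul] at hn
      norm_num at hn
    refine hx ⟨(m : ℚ) / (n : ℚ), ?_⟩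
    rw [zsmul_eq_mul] at hm hn
    have hc' : c = 1 / n := by field_simp; linear_combination hn
    push_cast
    rw [← hm, hc']
    field_simp

theorem stmt_12 (a b : ℝ)
    (h : ∀ p q : ℤ, (p, q) ≠ (0, 0) → (p : ℝ) * a - (q : ℝ) * b ≠ 0) :
    (⨆ t : ℝ, |Real.cos (t * a) - Real.cos (t * b)|) = 2 := by
  have ha : a ≠ 0 := by
    have := h 1 0 (by simp)
    simpa using this
  -- b/a is irrational
  have hirr : Irrational (b / a) := by
    rintro ⟨r, hr⟩
    apply h r.num r.den (by simp [Prod.ext_iff, r.den_nz])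
    have hden : ((r.den : ℝ)) ≠ 0 := by exact_mod_cast r.den_nz
    have hb : b = (r : ℝ) * a := by
      field_simp at hr
      linarith [hr]
    rw [hb, Rat.cast_def]
    field_simp
    simp
  -- boundedness
  have hbdd : BddAbove (Set.range fun t : ℝ => |Real.cos (t * a) - Real.cos (t * b)|) := by
    refine ⟨2, ?_⟩
    rintro y ⟨t, rfl⟩
    calc |Real.cos (t * a) - Real.cos (t * b)|
        ≤ |Real.cos (t * a)| + |Real.cos (t * b)| := abs_sub _ _
      _ ≤ 1 + 1 := add_le_add (Real.abs_cos_le_one _) (Real.abs_cos_le_one _)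
      _ = 2 := by norm_num
  have hub : (⨆ t : ℝ, |Real.cos (t * a) - Real.cos (t * b)|) ≤ 2 := by
    apply ciSup_le
    intro t
    calc |Real.cos (t * a) - Real.cos (t * b)|
        ≤ |Real.cos (t * a)| + |Real.cos (t * b)| := abs_sub _ _
      _ ≤ 1 + 1 := add_le_add (Real.abs_cos_le_one _) (Real.abs_cos_le_one _)
      _ = 2 := by norm_num
  have hlb : 2 ≤ (⨆ t : ℝ, |Real.cos (t * a) - Real.cos (t * b)|) := by
    apply le_of_forall_sub_le
    intro ε hε
    have hδ : (0 : ℝ) < ε / (2 * π) := div_pos hε (by positivity)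
    -- find s in the subgroup with |s - 1/2| < ε/(2π)
    have hd := my_dense_closure hirr
    obtain ⟨s, hsb, hsm⟩ := hd.exists_mem_open Metric.isOpen_ball
      ⟨(1 : ℝ) / 2, Metric.mem_ball_self hδ⟩
    rw [Set.pair_comm, ← Set.singleton_union, AddSubgroup.closure_union,
      SetLike.mem_coe, AddSubgroup.mem_sup] at hsb
    obtain ⟨y, hy, z, hz, hyz⟩ := hsb
    rw [AddSubgroup.mem_closure_singleton] at hy hz
    obtain ⟨n, hn⟩ := hy
    obtain ⟨m, hm⟩ := hz
    rw [zsmul_eq_mul] at hn hm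
    rw [mul_one] at hn
    -- s = n + m * (b/a)
    have hs : s = (n : ℝ) + (m : ℝ) * (b / a) := by rw [← hyz, ← hn, ← hm]
    set t : ℝ := 2 * π * m / a with ht
    have hta : t * a = (m : ℝ) * (2 * π) := by rw [ht, div_mul_cancel₀ _ ha]; ring
    have htb : t * b = 2 * π * s - (n : ℝ) * (2 * π) := by
      rw [hs, ht]; ring
    have hcos1 : Real.cos (t * a) = 1 := by rw [hta]; exact Real.cos_int_mul_two_pi m
    have hcos2 : Real.cos (t * b) = Real.cos (2 * π * s) := by
      rw [htb, sub_eq_neg_add, ← sub_eq_neg_add]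
      exact Real.cos_sub_int_mul_two_pi (2 * π * s) n
    -- cos (2πs) is within ε of -1
    have hdist : |2 * π * s - π| < ε := by
      have h1 : |2 * π * s - π| = 2 * π * |s - 1 / 2| := by
        have he : 2 * π * s - π = 2 * π * (s - 1 / 2) := by ring
        rw [he, abs_mul, abs_of_pos (show (0:ℝ) < 2 * π by positivity)]
      rw [h1]
      have h2 : |s - 1 / 2| < ε / (2 * π) := by
        simpa [Real.dist_eq] using Metric.mem_ball.mp hsm
      calc 2 * π * |s - 1 / 2| < 2 * π * (ε / (2 * π)) := by
            apply mul_lt_mul_of_pos_left h2 (by positivity)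
        _ = ε := by field_simp
    have hclose : |Real.cos (2 * π * s) - (-1)| < ε := by
      have := my_abs_cos_sub_cos_le (2 * π * s) π
      rw [Real.cos_pi] at this
      exact lt_of_le_of_lt this hdist
    have hval : 2 - ε ≤ |Real.cos (t * a) - Real.cos (t * b)| := by
      rw [hcos1, hcos2]
      have h3 : Real.cos (2 * π * s) < -1 + ε := by
        have := (abs_lt.mp hclose).2
        linarith
      rw [abs_of_nonneg (by nlinarith [Real.cos_le_one (2 * π * s)])]
      linarith
    exact le_trans hval (le_ciSup hbdd t)
  linarith
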